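/- Theorem 2 (equivalence of PaTh and the iterative variance-rescaling scheme). Fix y ∈ ℝⁿ, X ∈ ℝ^{n×p}, c > 0, p ≥ 2, and for every s ∈ {0,1,…,n} a support estimate Ŝ_s ⊆ {1,…,p} with |Ŝ_s| = s and Ŝ_0 = ∅; set σ̂_s² = ‖Π⊥[Ŝ_s] y‖₂²/n and Δ_s = Δ(Ŝ_s). Suppose σ̂_0 > σ̂_1 > ⋯ > σ̂_{n−1} > σ̂_n > 0 and that there exists some s with Δ_s < 2c σ̂_s² log p; let ŝ be the smallest such s (the PaTh output is Ŝ_ŝ). Consider the iteration: given a current estimate σ̂ > 0, put t(σ̂) = min{ s : Δ_s < 2c σ̂² log p }, update σ̂_new = σ̂_{t(σ̂)}, and repeat until σ̂_new = σ̂. Then, initialized at σ̂ = σ̂_0 = ‖y‖₂/√n, this iteration reaches an equilibrium σ̂ = σ̂_T with T = t(σ̂_T), and the corresponding output Ŝ_T equals the PaTh output Ŝ_ŝ (i.e., T = ŝ). -/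

import Mathlib

open MeasureTheory Real

/-- `Π⊥[S] v`: the orthogonal projection of `v` onto the orthogonal complement of the
column span of the columns of `X` indexed by `S` (so `Π⊥[∅] = id`). -/
noncomputable def projPerp {n p : ℕ} (X : Fin p → EuclideanSpace ℝ (Fin n))
    (S : Finset (Fin p)) (v : EuclideanSpace ℝ (Fin n)) : EuclideanSpace ℝ (Fin n) :=
  v - (Submodule.orthogonalProjection (Submodule.span ℝ (X '' ↑S)) v : EuclideanSpace ℝ (Fin n))

/-- `Δ(S) = max_{j ∉ S} (‖Π⊥[S] y‖² − ‖Π⊥[S∪{j}] y‖²)`. -/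
noncomputable def pathDelta {n p : ℕ} (X : Fin p → EuclideanSpace ℝ (Fin n))
    (S : Finset (Fin p)) (y : EuclideanSpace ℝ (Fin n)) : ℝ :=
  ⨆ j : {j : Fin p // j ∉ S}, (‖projPerp X S y‖ ^ 2 - ‖projPerp X (insert j.1 S) y‖ ^ 2)

/-- **Theorem 2: equivalence of PaTh and the iterative variance-rescaling scheme.**
Fix data `y, X`, `c > 0`, `p ≥ 2`, support estimates `Ŝ_s` with `|Ŝ_s| = s` and `Ŝ_0 = ∅`,
and set `σ̂_s² = ‖Π⊥[Ŝ_s] y‖²/n`, `Δ_s = Δ(Ŝ_s)`.  Assume `σ̂_0 > σ̂_1 > ⋯ > σ̂_n > 0`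
and that some `s` satisfies `Δ_s < 2c σ̂_s² log p`; let `ŝ` be the smallest such `s`
(the PaTh output is `Ŝ_ŝ`).  The iteration `u_0 = 0`, `u_{m+1} = t(σ̂_{u_m})` with
`t(σ̂) = min{s : Δ_s < 2c σ̂² log p}`, initialized at `σ̂ = σ̂_0 = ‖y‖₂/√n`, reaches an
equilibrium `T` with `T = t(σ̂_T)`, and `T = ŝ`, i.e. `Ŝ_T` equals the PaTh output. -/
theorem path_equals_variance_rescaling_iteration {n p : ℕ}
    (X : Fin p → EuclideanSpace ℝ (Fin n)) (y : EuclideanSpace ℝ (Fin n))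
    (c : ℝ) (hc : 0 < c) (hp : 2 ≤ p)
    (Shat : ℕ → Finset (Fin p)) (hcard : ∀ s ≤ n, (Shat s).card = s) (h0 : Shat 0 = ∅)
    (sigSq : ℕ → ℝ) (hsig : ∀ s, sigSq s = ‖projPerp X (Shat s) y‖ ^ 2 / n)
    (hdec : ∀ s < n, sigSq (s + 1) < sigSq s) (hpos : 0 < sigSq n)
    (hex : ∃ s ≤ n, pathDelta X (Shat s) y < 2 * c * sigSq s * Real.log p)
    (shat : ℕ)
    (hshat : shat
      = sInf {s | s ≤ n ∧ pathDelta X (Shat s) y < 2 * c * sigSq s * Real.log p})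
    (t : ℝ → ℕ)
    (ht : ∀ vSq : ℝ,
      t vSq = sInf {s | s ≤ n ∧ pathDelta X (Shat s) y < 2 * c * vSq * Real.log p})
    (u : ℕ → ℕ) (hu0 : u 0 = 0) (hu : ∀ m, u (m + 1) = t (sigSq (u m))) :
    ∃ M, u (M + 1) = u M ∧ t (sigSq (u M)) = u M ∧ u M = shat := by
  have hlog : 0 < Real.log p := Real.log_pos (by exact_mod_cast Nat.one_lt_two.trans_le hp)
  -- antitonicity of sigSq on [0, n]
  have hanti : ∀ b ≤ n, ∀ a ≤ b, sigSq b ≤ sigSq a := by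
    intro b hb
    induction b with
    | zero => intro a ha; simp [Nat.le_zero.mp ha]
    | succ b ih =>
      intro a ha
      rcases Nat.eq_or_lt_of_le ha with h | h
      · simp [h]
      · exact le_trans (le_of_lt (hdec b (Nat.lt_of_succ_le hb)))
          (ih (le_of_lt (Nat.lt_of_succ_le hb)) a (Nat.lt_succ_iff.mp h))
  -- shat belongs to the diagonal set
  have hne : {s | s ≤ n ∧ pathDelta X (Shat s) y < 2 * c * sigSq s * Real.log p}.Nonempty := by
    obtain ⟨s, hs1, hs2⟩ := hex; exact ⟨s, hs1, hs2⟩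
  have hshat_mem : shat ≤ n ∧ pathDelta X (Shat shat) y < 2 * c * sigSq shat * Real.log p := by
    rw [hshat]; exact Nat.sInf_mem hne
  -- shat belongs to S v whenever sigSq shat ≤ v
  have hmemS : ∀ v : ℝ, sigSq shat ≤ v →
      shat ∈ {s | s ≤ n ∧ pathDelta X (Shat s) y < 2 * c * v * Real.log p} := by
    intro v hv
    refine ⟨hshat_mem.1, lt_of_lt_of_le hshat_mem.2 ?_⟩
    gcongr <;> positivity
  have ht_le : ∀ v : ℝ, sigSq shat ≤ v → t v ≤ shat := by
    intro v hv; rw [ht]; exact Nat.sInf_le (hmemS v hv)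
  -- s ≤ t (sigSq s) for s ≤ shat
  have ht_ge : ∀ s ≤ shat, s ≤ t (sigSq s) := by
    intro s hs
    have hsn : s ≤ n := le_trans hs hshat_mem.1
    have hne2 : {s' | s' ≤ n ∧ pathDelta X (Shat s') y
        < 2 * c * sigSq s * Real.log p}.Nonempty :=
      ⟨shat, hmemS (sigSq s) (hanti shat hshat_mem.1 s hs)⟩
    by_contra h
    push_neg at h
    have hmem := Nat.sInf_mem hne2
    rw [← ht] at hmem
    -- t (sigSq s) < s is a smaller index in the set, contradicting minimality of shat
    set s' := t (sigSq s) with hs'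
    have hs'lt : s' < shat := lt_of_lt_of_le h hs
    have hnotD : s' ∉ {s | s ≤ n ∧ pathDelta X (Shat s) y
        < 2 * c * sigSq s * Real.log p} := by
      intro hmemD
      have := Nat.sInf_le hmemD
      rw [← hshat] at this
      exact absurd this (not_le.mpr hs'lt)
    apply hnotD
    refine ⟨hmem.1, lt_of_lt_of_le hmem.2 ?_⟩
    have hle : sigSq s ≤ sigSq s' := hanti s hsn s' (le_of_lt h)
    gcongr <;> positivity
  -- u is bounded by shat
  have hub : ∀ m, u m ≤ shat := by
    intro m
    induction m with
    | zero => simp [hu0]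
    | succ m ih =>
      rw [hu]
      exact ht_le (sigSq (u m)) (hanti shat hshat_mem.1 (u m) ih)
  -- u is monotone
  have hmono : ∀ m, u m ≤ u (m + 1) := by
    intro m; rw [hu]; exact ht_ge (u m) (hub m)
  -- existence of a fixed point
  have hfix : ∃ M, u (M + 1) = u M := by
    by_contra h
    push_neg at h
    have hstrict : ∀ m, u m < u (m + 1) := fun m => lt_of_le_of_ne (hmono m) (Ne.symm (h m))
    have hgrow : ∀ m, m ≤ u m := by
      intro m
      induction m with
      | zero => exact Nat.zero_le _
      | succ m ih => exact Nat.succ_le_of_lt (lt_of_le_of_lt ih (hstrict m))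
    exact absurd (hub (shat + 1)) (not_le.mpr (Nat.lt_of_succ_le (hgrow (shat + 1))))
  obtain ⟨M, hM⟩ := hfix
  have hteq : t (sigSq (u M)) = u M := by rw [← hu]; exact hM
  refine ⟨M, hM, hteq, ?_⟩
  -- T := u M equals shat
  have hTle : u M ≤ shat := hub M
  have hne3 : {s' | s' ≤ n ∧ pathDelta X (Shat s') y
      < 2 * c * sigSq (u M) * Real.log p}.Nonempty :=
    ⟨shat, hmemS (sigSq (u M)) (hanti shat hshat_mem.1 (u M) hTle)⟩
  have hmem3 := Nat.sInf_mem hne3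
  rw [← ht, hteq] at hmem3
  have : shat ≤ u M := by
    rw [hshat]; exact Nat.sInf_le ⟨hmem3.1, hmem3.2⟩
  omega
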